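/- Let W = (W₁, …, W_q) be a q-dimensional Gaussian random vector with mean zero and diagonal nonsingular covariance matrix Σ_q = diag(σ₁², …, σ_q²), and define T = (0 ∨ W)ᵀ Σ_q^{-1} (0 ∨ W) = Σ_{i=1}^q (max(0, W_i))² / σ_i². Then T is distributed as the chi-square mixture Σ_{i=0}^q binom(q, i) 2^{-q} χ²_i; that is, for every c ≥ 0, P(T ≤ c) = Σ_{i=0}^q binom(q, i) 2^{-q} P(χ²_i ≤ c), where χ²₀ denotes the point mass at 0 and χ²_i the chi-square distribution with i degrees of freedom. -/

import Mathlib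

open MeasureTheory ProbabilityTheory
open scoped BigOperators ENNReal NNReal

/-- The chi-square distribution with `k` degrees of freedom, realized as the law of the
squared Euclidean norm of a standard Gaussian vector in `ℝ^k`.  For `k = 0` this is the
point mass at `0`. -/
noncomputable def chiSqMeasure (k : ℕ) : Measure ℝ :=
  (Measure.pi fun _ : Fin k => gaussianReal 0 1).map fun y => ∑ j, (y j) ^ 2

noncomputable def stdG : Measure ℝ := gaussianReal 0 1

instance : IsProbabilityMeasure stdG := by unfold stdG; infer_instance

lemma stdG_map_neg : stdG.map (fun x => -x) = stdG := by
  have h := gaussianReal_map_const_mul (μ := 0) (v := 1) (-1)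
  have h2 : (NNReal.mk ((-1:ℝ)^2) (sq_nonneg _)) * 1 = 1 := by
    ext; norm_num
  rw [h2] at h
  simpa [stdG, neg_one_mul] using h

lemma stdG_singleton (x : ℝ) : stdG {x} = 0 := by
  rw [stdG, gaussianReal_of_var_ne_zero _ one_ne_zero,
    withDensity_apply _ (measurableSet_singleton x)]
  rw [setLIntegral_measure_zero _ _ (by simp)]

lemma half_lintegral {f : ℝ → ℝ≥0∞} (hf : Measurable f) (heven : ∀ x, f (-x) = f x) :
    ∫⁻ x in Set.Ioi 0, f x ∂stdG = 2⁻¹ * ∫⁻ x, f x ∂stdG := by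
  have hIio : ∫⁻ x in Set.Iio 0, f x ∂stdG = ∫⁻ x in Set.Ioi 0, f x ∂stdG := by
    conv_lhs => rw [← stdG_map_neg]
    rw [setLIntegral_map measurableSet_Iio hf measurable_neg]
    have : (fun x : ℝ => -x) ⁻¹' Set.Iio 0 = Set.Ioi 0 := by
      ext x; simp
    rw [this]
    exact setLIntegral_congr_fun measurableSet_Ioi (fun x _ => heven x)
  have htot : ∫⁻ x, f x ∂stdG
      = ∫⁻ x in Set.Iio 0, f x ∂stdG + ∫⁻ x in Set.Ioi 0, f x ∂stdG := by
    rw [← lintegral_add_compl (f := f) (μ := stdG) (measurableSet_singleton (0:ℝ))]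
    rw [setLIntegral_measure_zero _ _ (stdG_singleton 0), zero_add]
    have : ({(0:ℝ)}ᶜ : Set ℝ) = Set.Iio 0 ∪ Set.Ioi 0 := by
      ext x; simp [lt_or_lt_iff_ne, ne_comm]
    rw [this, lintegral_union measurableSet_Ioi (by rw [Set.disjoint_left]; intro a ha hb; exact absurd (Set.mem_Iio.1 ha) (not_lt.2 (le_of_lt (Set.mem_Ioi.1 hb))))]
  rw [htot, hIio, ← two_mul, ← mul_assoc, ENNReal.inv_mul_cancel two_ne_zero ENNReal.ofNat_ne_top,
    one_mul]

lemma stdG_Iic_zero : stdG (Set.Iic 0) = 2⁻¹ := by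
  have h := half_lintegral (f := fun _ => 1) measurable_const (fun _ => rfl)
  simp only [lintegral_const, measure_univ, mul_one, one_mul, Measure.restrict_apply,
    Set.univ_inter, MeasurableSet.univ] at h
  have hcompl : Set.Iic (0:ℝ) = (Set.Ioi 0)ᶜ := by simp
  rw [hcompl, measure_compl measurableSet_Ioi (measure_ne_top _ _), h, measure_univ]
  rw [← ENNReal.inv_two_add_inv_two, ENNReal.add_sub_cancel_right (by simp)]

lemma measurable_sumsq (k : ℕ) : Measurable (fun y : Fin k → ℝ => ∑ j, (y j) ^ 2) := by
  exact Finset.measurable_sum _ fun j _ => (measurable_pi_apply j).pow_const 2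

instance chiSq_prob (k : ℕ) : IsProbabilityMeasure (chiSqMeasure k) :=
  Measure.isProbabilityMeasure_map (measurable_sumsq k).aemeasurable

lemma measurable_chiSq_fun (k : ℕ) (c : ℝ) :
    Measurable (fun t : ℝ => chiSqMeasure k (Set.Iic (c - t ^ 2))) := by
  have hmono : Monotone (fun u : ℝ => chiSqMeasure k (Set.Iic u)) :=
    fun a b hab => measure_mono (Set.Iic_subset_Iic.2 hab)
  exact hmono.measurable.comp ((measurable_const.sub ((measurable_id.pow_const 2)) :
    Measurable fun t : ℝ => c - t ^ 2))

lemma chiSq_rec (k : ℕ) (c : ℝ) :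
    chiSqMeasure (k + 1) (Set.Iic c)
      = ∫⁻ t : ℝ, chiSqMeasure k (Set.Iic (c - t ^ 2)) ∂stdG := by
  rw [chiSqMeasure, Measure.map_apply (measurable_sumsq _) measurableSet_Iic]
  have hmp := (measurePreserving_piFinSuccAbove (fun _ : Fin (k+1) => (gaussianReal 0 1 : Measure ℝ)) 0).symm
  set s : Set (Fin (k+1) → ℝ) := (fun y : Fin (k+1) → ℝ => ∑ j, (y j) ^ 2) ⁻¹' Set.Iic c with hs
  have hsm : MeasurableSet s := (measurable_sumsq _) measurableSet_Iic
  rw [← hmp.measure_preimage hsm.nullMeasurableSet]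
  have hpre : (MeasurableEquiv.piFinSuccAbove (fun _ : Fin (k+1) => ℝ) 0).symm ⁻¹' s
      = {p : ℝ × (Fin k → ℝ) | p.1 ^ 2 + ∑ j, (p.2 j) ^ 2 ≤ c} := by
    ext ⟨t, z⟩
    simp only [Set.mem_preimage, hs, Set.mem_setOf_eq, Set.mem_Iic,
      MeasurableEquiv.piFinSuccAbove_symm_apply, Fin.sum_univ_succ]
    simp [Fin.insertNthEquiv, Fin.insertNth_zero']
  rw [hpre, Measure.prod_apply]
  · refine lintegral_congr fun t => ?_
    rw [chiSqMeasure, Measure.map_apply (measurable_sumsq _) measurableSet_Iic]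
    congr 1
    ext z
    simp only [Set.mem_preimage, Set.mem_setOf_eq, Set.mem_Iic]
    constructor
    · intro h; linarith
    · intro h; linarith
  · exact measurableSet_le (by fun_prop) measurable_const

lemma pascal_sum {R : Type*} [CommSemiring R] (q : ℕ) (h : R) (T : ℕ → R) :
    h * ∑ i ∈ Finset.range (q+1), (q.choose i : R) * h ^ q * T i
      + ∑ i ∈ Finset.range (q+1), (q.choose i : R) * h ^ q * (h * T (i+1))
    = ∑ i ∈ Finset.range (q+2), ((q+1).choose i : R) * h ^ (q+1) * T i := by
  have hS1 : h * ∑ i ∈ Finset.range (q+1), (q.choose i : R) * h ^ q * T i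
      = ∑ i ∈ Finset.range q, (q.choose (i+1) : R) * h ^ (q+1) * T (i+1)
        + h ^ (q+1) * T 0 := by
    rw [Finset.sum_range_succ' _ q, mul_add, Finset.mul_sum]
    congr 1
    · exact Finset.sum_congr rfl fun i _ => by ring
    · simp only [Nat.choose_zero_right, Nat.cast_one, one_mul]; ring
  have hS2 : ∑ i ∈ Finset.range (q+1), (q.choose i : R) * h ^ q * (h * T (i+1))
      = ∑ i ∈ Finset.range (q+1), (q.choose i : R) * h ^ (q+1) * T (i+1) :=
    Finset.sum_congr rfl fun i _ => by ring
  rw [hS1, hS2, Finset.sum_range_succ' _ (q+1)]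
  simp only [Nat.choose_succ_succ, Nat.cast_add, add_mul, Nat.choose_zero_right, Nat.cast_one,
    one_mul, Nat.succ_eq_add_one]
  rw [Finset.sum_add_distrib]
  have hS3 : ∑ i ∈ Finset.range (q+1), (q.choose (i+1) : R) * h ^ (q+1) * T (i+1)
      = ∑ i ∈ Finset.range q, (q.choose (i+1) : R) * h ^ (q+1) * T (i+1) := by
    rw [Finset.sum_range_succ, Nat.choose_succ_self, Nat.cast_zero, zero_mul, zero_mul, add_zero]
  rw [hS3]
  ring

lemma measurable_maxsumsq (k : ℕ) :
    Measurable (fun y : Fin k → ℝ => ∑ j, max 0 (y j) ^ 2) :=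
  Finset.measurable_sum _ fun j _ =>
    ((measurable_const.max (measurable_pi_apply j)).pow_const 2)

lemma key (q : ℕ) : ∀ c : ℝ,
    (Measure.pi fun _ : Fin q => gaussianReal 0 1) {x | ∑ i, max 0 (x i) ^ 2 ≤ c}
      = ∑ i ∈ Finset.range (q+1),
          (q.choose i : ℝ≥0∞) * 2⁻¹ ^ q * chiSqMeasure i (Set.Iic c) := by
  induction q with
  | zero =>
    intro c
    rw [Finset.sum_range_succ, Finset.range_zero, Finset.sum_empty, zero_add]
    simp only [Nat.choose_self, pow_zero, Nat.cast_one, one_mul]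
    rw [show chiSqMeasure 0 = (Measure.pi fun _ : Fin 0 => gaussianReal 0 1).map
      (fun y => ∑ j, (y j) ^ 2) from rfl]
    rw [Measure.map_apply (measurable_sumsq 0) measurableSet_Iic]
    congr 1
  | succ q ih =>
    intro c
    have hmp := (measurePreserving_piFinSuccAbove
      (fun _ : Fin (q+1) => (gaussianReal 0 1 : Measure ℝ)) 0).symm
    set s : Set (Fin (q+1) → ℝ) := {x | ∑ i, max 0 (x i) ^ 2 ≤ c} with hs
    have hsm : MeasurableSet s := measurableSet_le (measurable_maxsumsq _) measurable_const
    rw [← hmp.measure_preimage hsm.nullMeasurableSet]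
    have hpre : (MeasurableEquiv.piFinSuccAbove (fun _ : Fin (q+1) => ℝ) 0).symm ⁻¹' s
        = {p : ℝ × (Fin q → ℝ) | max 0 p.1 ^ 2 + ∑ j, max 0 (p.2 j) ^ 2 ≤ c} := by
      ext ⟨t, z⟩
      simp only [Set.mem_preimage, hs, Set.mem_setOf_eq,
        MeasurableEquiv.piFinSuccAbove_symm_apply, Fin.sum_univ_succ]
      simp [Fin.insertNthEquiv, Fin.insertNth_zero']
    rw [hpre, Measure.prod_apply
      (measurableSet_le (by fun_prop) measurable_const)]
    have hsec : ∀ t : ℝ,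
        (Measure.pi fun _ : Fin q => (gaussianReal 0 1 : Measure ℝ))
            (Prod.mk t ⁻¹' {p : ℝ × (Fin q → ℝ) | max 0 p.1 ^ 2 + ∑ j, max 0 (p.2 j) ^ 2 ≤ c})
          = (Measure.pi fun _ : Fin q => (gaussianReal 0 1 : Measure ℝ))
            {z : Fin q → ℝ | ∑ j, max 0 (z j) ^ 2 ≤ c - max 0 t ^ 2} := by
      intro t
      congr 1
      ext z
      simp only [Set.mem_preimage, Set.mem_setOf_eq]
      constructor <;> intro h <;> linarith
    simp_rw [hsec]
    simp_rw [fun t : ℝ => ih (c - max 0 t ^ 2)]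
    rw [show (gaussianReal (0:ℝ) 1) = stdG from rfl]
    rw [← lintegral_add_compl (μ := stdG) _ (measurableSet_Iic (a := (0:ℝ))), Set.compl_Iic]
    have hIic : ∫⁻ t in Set.Iic 0, (∑ i ∈ Finset.range (q+1),
          (q.choose i : ℝ≥0∞) * 2⁻¹ ^ q * chiSqMeasure i (Set.Iic (c - max 0 t ^ 2))) ∂stdG
        = 2⁻¹ * ∑ i ∈ Finset.range (q+1),
          (q.choose i : ℝ≥0∞) * 2⁻¹ ^ q * chiSqMeasure i (Set.Iic c) := by
      have h1 : ∀ t ∈ Set.Iic (0:ℝ), (∑ i ∈ Finset.range (q+1),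
            (q.choose i : ℝ≥0∞) * 2⁻¹ ^ q * chiSqMeasure i (Set.Iic (c - max 0 t ^ 2)))
          = ∑ i ∈ Finset.range (q+1),
            (q.choose i : ℝ≥0∞) * 2⁻¹ ^ q * chiSqMeasure i (Set.Iic c) := by
        intro t ht
        rw [max_eq_left ht]
        norm_num
      rw [setLIntegral_congr_fun measurableSet_Iic h1,
        setLIntegral_const, stdG_Iic_zero, mul_comm]
    have hIoi : ∫⁻ t in Set.Ioi 0, (∑ i ∈ Finset.range (q+1),
          (q.choose i : ℝ≥0∞) * 2⁻¹ ^ q * chiSqMeasure i (Set.Iic (c - max 0 t ^ 2))) ∂stdG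
        = ∑ i ∈ Finset.range (q+1),
          (q.choose i : ℝ≥0∞) * 2⁻¹ ^ q * (2⁻¹ * chiSqMeasure (i+1) (Set.Iic c)) := by
      have h2 : ∀ t ∈ Set.Ioi (0:ℝ), (∑ i ∈ Finset.range (q+1),
            (q.choose i : ℝ≥0∞) * 2⁻¹ ^ q * chiSqMeasure i (Set.Iic (c - max 0 t ^ 2)))
          = ∑ i ∈ Finset.range (q+1),
            (q.choose i : ℝ≥0∞) * 2⁻¹ ^ q * chiSqMeasure i (Set.Iic (c - t ^ 2)) := by
        intro t ht
        rw [max_eq_right (le_of_lt ht)]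
      rw [setLIntegral_congr_fun measurableSet_Ioi h2]
      rw [half_lintegral (f := fun t => ∑ i ∈ Finset.range (q+1),
          (q.choose i : ℝ≥0∞) * 2⁻¹ ^ q * chiSqMeasure i (Set.Iic (c - t ^ 2)))
        (Finset.measurable_sum _ fun i _ => (measurable_chiSq_fun i c).const_mul _)
        (fun x => by simp [neg_pow])]
      rw [lintegral_finset_sum _ fun i _ => (measurable_chiSq_fun i c).const_mul _]
      rw [Finset.mul_sum]
      refine Finset.sum_congr rfl fun i _ => ?_
      rw [lintegral_const_mul _ (measurable_chiSq_fun i c), ← chiSq_rec]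
      ring
    rw [hIic, hIoi]
    exact pascal_sum q 2⁻¹ (fun i => chiSqMeasure i (Set.Iic c))

lemma sqrt_mp (a : ℝ) (ha : 0 < a) :
    MeasurePreserving (fun y : ℝ => Real.sqrt a * y) stdG (gaussianReal 0 a.toNNReal) := by
  refine ⟨measurable_const_mul _, ?_⟩
  have h := gaussianReal_map_const_mul (μ := 0) (v := 1) (Real.sqrt a)
  have h2 : (NNReal.mk (Real.sqrt a ^ 2) (sq_nonneg _)) * 1 = a.toNNReal := by
    ext
    simp [Real.sq_sqrt ha.le, Real.coe_toNNReal _ ha.le]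
  rw [h2, mul_zero] at h
  exact h

/-- If `W` is a `q`-dimensional centered Gaussian vector with diagonal
nonsingular covariance `Σ_q = diag(σ₁², …, σ_q²)` (so that its law is the product of the
one-dimensional Gaussians `N(0, σᵢ²)`), then
`T = (0 ∨ W)ᵀ Σ_q⁻¹ (0 ∨ W) = ∑ᵢ (max 0 Wᵢ)²/σᵢ²` is distributed as the chi-square mixture
`∑_{i=0}^q binom(q,i) 2^{-q} χ²ᵢ`: for every `c ≥ 0`,
`P(T ≤ c) = ∑_{i=0}^q binom(q,i) 2^{-q} P(χ²ᵢ ≤ c)`. -/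
theorem one_sided_diagonal_chi_square_mixture
    (q : ℕ) (v : Fin q → ℝ) (hv : ∀ i, 0 < v i) :
    ∀ c : ℝ, 0 ≤ c →
      ((Measure.pi fun i : Fin q => gaussianReal 0 (Real.toNNReal (v i)))
          {x | ∑ i, max 0 (x i) ^ 2 / v i ≤ c}).toReal
        = ∑ i ∈ Finset.range (q + 1),
            (q.choose i : ℝ) * (2 : ℝ) ^ (-(q : ℤ)) *
              ((chiSqMeasure i) (Set.Iic c)).toReal := by
  intro c _
  have hmp := measurePreserving_pi (fun _ : Fin q => stdG)
    (fun i => gaussianReal 0 (Real.toNNReal (v i)))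
    (fun i => sqrt_mp (v i) (hv i))
  set S : Set (Fin q → ℝ) := {x | ∑ i, max 0 (x i) ^ 2 / v i ≤ c} with hS
  have hSm : MeasurableSet S := measurableSet_le (Finset.measurable_sum _ fun i _ =>
    (((measurable_const.max (measurable_pi_apply i)).pow_const 2).div_const _)) measurable_const
  rw [← hmp.measure_preimage hSm.nullMeasurableSet]
  have hpre : (fun (a : Fin q → ℝ) i => Real.sqrt (v i) * a i) ⁻¹' S
      = {x : Fin q → ℝ | ∑ i, max 0 (x i) ^ 2 ≤ c} := by
    ext x
    simp only [Set.mem_preimage, hS, Set.mem_setOf_eq]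
    have hterm : ∀ i : Fin q, max 0 (Real.sqrt (v i) * x i) ^ 2 / v i = max 0 (x i) ^ 2 := by
      intro i
      have hmax : max 0 (Real.sqrt (v i) * x i) = Real.sqrt (v i) * max 0 (x i) := by
        rw [mul_max_of_nonneg _ _ (Real.sqrt_nonneg _), mul_zero]
      rw [hmax]
      rw [mul_pow, Real.sq_sqrt (hv i).le, mul_div_cancel_left₀ _ (ne_of_gt (hv i))]
    simp_rw [hterm]
  rw [hpre, show Measure.pi (fun _ : Fin q => stdG)
    = Measure.pi (fun _ : Fin q => gaussianReal 0 1) from rfl, key q c]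
  rw [ENNReal.toReal_sum (fun i _ =>
    ENNReal.mul_ne_top (ENNReal.mul_ne_top (ENNReal.natCast_ne_top _)
      (by simp)) (measure_ne_top _ _))]
  refine Finset.sum_congr rfl fun i _ => ?_
  rw [ENNReal.toReal_mul, ENNReal.toReal_mul, ENNReal.toReal_pow, ENNReal.toReal_inv]
  have : ((q.choose i : ℝ≥0∞)).toReal = (q.choose i : ℝ) := by simp
  rw [this]
  congr 1
  rw [zpow_neg, zpow_natCast, inv_pow]
  norm_num
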